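/- Let (A_j)_{j∈J} be a family of commutative rings and let R = ∏_{j∈J} A_j be their product. Let M be a finitely presented R-module. Then for each j ∈ J the base change A_j ⊗_R M of M along the projection R → A_j is a finitely presented A_j-module, and the canonical R-linear map M → ∏_{j∈J} (A_j ⊗_R M), sending m to the family (1 ⊗ m)_{j∈J}, is bijective. -/

import Mathlib

open scoped TensorProduct

/-- Each factor `A j` of a product ring is an algebra over the product via the projection. -/
noncomputable instance piEvalAlgebra {J : Type*} {A : J → Type*} [∀ j, CommRing (A j)]
    {j : J} : Algebra (∀ j', A j') (A j) :=
  (Pi.evalRingHom A j).toAlgebra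

/-- Auxiliary: an element of `A j ⊗ (Fin k → R)` whose components (under `piScalarRightHom`)
come from evaluating a family `y : Fin k → R` at `j` equals `1 ⊗ y`. -/
lemma piEval_tmul_eq_of_components {J : Type*} {A : J → Type*} [∀ j, CommRing (A j)]
    {k : ℕ} (j : J) (t : (A j) ⊗[∀ j', A j'] (Fin k → (∀ j', A j')))
    (y : Fin k → ∀ j', A j')
    (hy : ∀ i, y i j =
      TensorProduct.piScalarRightHom (∀ j', A j') (A j) (A j) (Fin k) t i) :
    (1 : A j) ⊗ₜ[∀ j', A j'] y = t := by
  apply (TensorProduct.piScalarRight (∀ j', A j') (A j) (A j) (Fin k)).injective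
  ext i
  simp only [TensorProduct.piScalarRight_apply, TensorProduct.piScalarRightHom_tmul]
  rw [Algebra.smul_def, RingHom.algebraMap_toAlgebra, mul_one]
  exact hy i

lemma piEval_eval_tmul {J : Type*} {A : J → Type*} [∀ j, CommRing (A j)]
    {k : ℕ} (j : J) (z : Fin k → ∀ j', A j') (i : Fin k) :
    TensorProduct.piScalarRightHom (∀ j', A j') (A j) (A j) (Fin k)
      ((1 : A j) ⊗ₜ[∀ j', A j'] z) i = z i j := by
  simp only [TensorProduct.piScalarRightHom_tmul]
  rw [Algebra.smul_def, RingHom.algebraMap_toAlgebra, mul_one]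
  rfl

/-- A finitely presented module over a product of commutative rings: each base change
`A j ⊗_R M` along the projection `R = ∏ A j → A j` is finitely presented over `A j`,
and the canonical map `M → ∏ (A j ⊗_R M)`, `m ↦ (1 ⊗ m)_j`, is bijective. -/
theorem finitePresentation_over_product
    {J : Type*} (A : J → Type*) [∀ j, CommRing (A j)]
    (M : Type*) [AddCommGroup M] [Module (∀ j, A j) M]
    [Module.FinitePresentation (∀ j, A j) M] :
    (∀ j, Module.FinitePresentation (A j) ((A j) ⊗[∀ j', A j'] M)) ∧
      Function.Bijective
        (fun (m : M) (j : J) => ((1 : A j) ⊗ₜ[∀ j', A j'] m : (A j) ⊗[∀ j', A j'] M)) := by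
  classical
  refine ⟨fun j => inferInstance, ?_⟩
  set R := ∀ j', A j' with hR
  -- a finite presentation of M
  obtain ⟨n, f, hf⟩ := Module.Finite.exists_fin' R M
  have hker : (LinearMap.ker f).FG := Module.FinitePresentation.fg_ker f hf
  obtain ⟨m', s, hs⟩ := Submodule.fg_iff_exists_fin_generating_family.mp hker
  set g : (Fin m' → R) →ₗ[R] (Fin n → R) := Fintype.linearCombination R s with hgdef
  have hg : LinearMap.range g = LinearMap.ker f := by
    rw [hgdef, Fintype.range_linearCombination, hs]
  -- the canonical map, as a linear map
  set φ : M →ₗ[R] ∀ j, (A j) ⊗[R] M :=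
    LinearMap.pi (fun j => TensorProduct.mk R (A j) M 1) with hφ
  show Function.Bijective φ
  have hexact : ∀ j : J, Function.Exact
      (LinearMap.lTensor (A j) g) (LinearMap.lTensor (A j) f) := by
    intro j
    refine lTensor_exact (A j) ?_ hf
    rw [LinearMap.exact_iff, hg]
  constructor
  · -- injectivity
    rw [← LinearMap.ker_eq_bot, eq_bot_iff]
    intro m hm
    simp only [LinearMap.mem_ker] at hm
    have hm' : ∀ j : J, (1 : A j) ⊗ₜ[R] m = 0 := fun j => congrFun hm j
    obtain ⟨x, rfl⟩ := hf m
    have h0 : ∀ j : J, ∃ t : (A j) ⊗[R] (Fin m' → R),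
        LinearMap.lTensor (A j) g t = (1 : A j) ⊗ₜ[R] x := by
      intro j
      have : LinearMap.lTensor (A j) f ((1 : A j) ⊗ₜ[R] x) = 0 := by
        rw [LinearMap.lTensor_tmul]
        exact hm' j
      exact (hexact j ((1 : A j) ⊗ₜ[R] x)).mp this
    choose t ht using h0
    set y : Fin m' → R := fun k j =>
      TensorProduct.piScalarRightHom R (A j) (A j) (Fin m') (t j) k with hy
    have hty : ∀ j : J, (1 : A j) ⊗ₜ[R] y = t j := by
      intro j
      exact piEval_tmul_eq_of_components j (t j) y (fun i => rfl)
    have hgyx : g y = x := by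
      funext i
      funext j
      have h1 : (1 : A j) ⊗ₜ[R] (g y) = (1 : A j) ⊗ₜ[R] x := by
        calc (1 : A j) ⊗ₜ[R] (g y) = LinearMap.lTensor (A j) g ((1 : A j) ⊗ₜ[R] y) := by
              rw [LinearMap.lTensor_tmul]
          _ = LinearMap.lTensor (A j) g (t j) := by rw [hty j]
          _ = (1 : A j) ⊗ₜ[R] x := ht j
      have h2 := congrArg (fun w => TensorProduct.piScalarRightHom R (A j) (A j) (Fin n) w i) h1
      rw [piEval_eval_tmul, piEval_eval_tmul] at h2
      exact h2
    have : x ∈ LinearMap.ker f := by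
      rw [← hg, ← hgyx]
      exact LinearMap.mem_range_self g y
    simpa using this
  · -- surjectivity
    intro x
    have h0 : ∀ j : J, ∃ t : (A j) ⊗[R] (Fin n → R),
        LinearMap.lTensor (A j) f t = x j := fun j =>
      LinearMap.lTensor_surjective (A j) hf (x j)
    choose t ht using h0
    set z : Fin n → R := fun i j =>
      TensorProduct.piScalarRightHom R (A j) (A j) (Fin n) (t j) i with hz
    have htz : ∀ j : J, (1 : A j) ⊗ₜ[R] z = t j := by
      intro j
      exact piEval_tmul_eq_of_components j (t j) z (fun i => rfl)
    refine ⟨f z, ?_⟩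
    funext j
    show (1 : A j) ⊗ₜ[R] (f z) = x j
    calc (1 : A j) ⊗ₜ[R] (f z) = LinearMap.lTensor (A j) f ((1 : A j) ⊗ₜ[R] z) := by
          rw [LinearMap.lTensor_tmul]
      _ = LinearMap.lTensor (A j) f (t j) := by rw [htz j]
      _ = x j := ht j
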